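/- Let H_{B,N} denote the N-level stationary harmonic measure. For connected sets V̄, Ṽ ⊆ H containing L_0, and any directed boundary edge e⃗ = x → y with x ∈ V̄ ∩ Ṽ and y ∉ V̄ ∪ Ṽ, one has |H_{V̄}(e⃗) − H_{Ṽ}(e⃗)| ≤ H_{V̄ ∩ Ṽ}(e⃗) − H_{V̄ ∪ Ṽ}(e⃗). -/

import Mathlib

open MeasureTheory Filter Set
open scoped ENNReal Classical

/-- Lattice sites of `ℤ²`. -/
abbrev Site := ℤ × ℤ

/-- Nearest-neighbor adjacency in `ℤ²` (ℓ¹-distance one). -/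
def adjSite (a b : Site) : Prop := |b.1 - a.1| + |b.2 - a.2| = 1

/-- The horizontal line `L_k = ℤ × {k}`. -/
def Line (k : ℤ) : Set Site := {p | p.2 = k}

/-- The upper half-plane `H = {(x,y) : y ≥ 0}` (including the x-axis). -/
def UH : Set Site := {p | 0 ≤ p.2}

/-- `P` is the family of laws of a simple random walk `S` on `ℤ²` indexed by the
starting point: the probability of following any prescribed nearest-neighbor
trajectory of length `n` from the start is `(1/4)^n`, and `0` for non-admissible
trajectories. -/
def IsSRW {Ω : Type*} [MeasurableSpace Ω] (P : Site → Measure Ω) (S : ℕ → Ω → Site) : Prop :=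
  (∀ z, IsProbabilityMeasure (P z)) ∧
  ∀ z : Site, ∀ n : ℕ, ∀ f : ℕ → Site, f 0 = z →
    P z {ω | ∀ m ≤ n, S m ω = f m} =
      if ∀ m < n, adjSite (f m) (f (m + 1)) then ((1 : ℝ≥0∞) / 4) ^ n else 0

/-- The walk first enters `A` at time `n`. -/
def FirstHitAt {Ω : Type*} (S : ℕ → Ω → Site) (A : Set Site) (n : ℕ) (ω : Ω) : Prop :=
  S n ω ∈ A ∧ ∀ m < n, S m ω ∉ A

/-- The event `{τ_A < τ_B}`: the walk hits `A` at some positive time, without having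
visited `B` at any positive time up to that moment. -/
def HitsBefore {Ω : Type*} (S : ℕ → Ω → Site) (A B : Set Site) (ω : Ω) : Prop :=
  ∃ k : ℕ, 1 ≤ k ∧ S k ω ∈ A ∧ ∀ m : ℕ, 1 ≤ m → m ≤ k → S m ω ∉ B

/-- `N`-level stationary harmonic measure of a point `x ∈ B`:
`H_{B,N}(x) = ∑_{z ∈ L_N \ B} P_z(S_{τ̄_{B∪L₀}} = x)`. -/
noncomputable def HpointN {Ω : Type*} [MeasurableSpace Ω] (P : Site → Measure Ω)
    (S : ℕ → Ω → Site) (B : Set Site) (N : ℤ) (x : Site) : ℝ≥0∞ :=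
  ∑' z : ↥(Line N \ B),
    P z {ω | ∃ n : ℕ, FirstHitAt S (B ∪ Line 0) n ω ∧ S n ω = x}

/-- `N`-level stationary harmonic measure of a directed edge `e = x → y` with `x ∈ B`:
`H_{B,N}(e) = ∑_{z ∈ L_N \ B} P_z(S_{τ̄_{B∪L₀}} = x, S_{τ̄_{B∪L₀}-1} = y)`. -/
noncomputable def HedgeN {Ω : Type*} [MeasurableSpace Ω] (P : Site → Measure Ω)
    (S : ℕ → Ω → Site) (B : Set Site) (N : ℤ) (e : Site × Site) : ℝ≥0∞ :=
  ∑' z : ↥(Line N \ B),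
    P z {ω | ∃ n : ℕ, 1 ≤ n ∧ FirstHitAt S (B ∪ Line 0) n ω ∧
      S n ω = e.1 ∧ S (n - 1) ω = e.2}

/-- Stationary harmonic measure of an edge, `H_B(e) = lim_{N→∞} H_{B,N}(e)`
(realized as a `limsup`; the limit exists by Proposition 1 of [PZ19]). -/
noncomputable def HedgeLim {Ω : Type*} [MeasurableSpace Ω] (P : Site → Measure Ω)
    (S : ℕ → Ω → Site) (B : Set Site) (e : Site × Site) : ℝ≥0∞ :=
  Filter.limsup (fun N : ℕ => HedgeN P S B (N : ℤ) e) atTop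

/-- Stationary harmonic measure of a point, `H_B(x) = lim_{N→∞} H_{B,N}(x)`. -/
noncomputable def HpointLim {Ω : Type*} [MeasurableSpace Ω] (P : Site → Measure Ω)
    (S : ℕ → Ω → Site) (B : Set Site) (x : Site) : ℝ≥0∞ :=
  Filter.limsup (fun N : ℕ => HpointN P S B (N : ℤ) x) atTop

/-- `B` is connected as a subset of the nearest-neighbor lattice. -/
def SetConnected (B : Set Site) : Prop :=
  ∀ x ∈ B, ∀ y ∈ B, ∃ k : ℕ, ∃ f : ℕ → Site, f 0 = x ∧ f k = y ∧
    (∀ i < k, adjSite (f i) (f (i + 1))) ∧ ∀ i ≤ k, f i ∈ B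

/-- Monotonicity: enlarging `B` decreases the `N`-level edge harmonic measure,
provided the edge tip `e.1` lies in the smaller set. -/
lemma hedgeN_anti {Ω : Type*} [MeasurableSpace Ω] (P : Site → Measure Ω)
    (S : ℕ → Ω → Site) {B B' : Set Site} (hBB : B ⊆ B') (N : ℤ) (e : Site × Site)
    (hx : e.1 ∈ B) : HedgeN P S B' N e ≤ HedgeN P S B N e := by
  unfold HedgeN
  have hsub : Line N \ B' ⊆ Line N \ B := fun z hz => ⟨hz.1, fun h => hz.2 (hBB h)⟩
  refine Summable.tsum_le_tsum_of_inj (Set.inclusion hsub) (Set.inclusion_injective hsub)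
    (fun _ _ => zero_le) (fun z => ?_) ENNReal.summable ENNReal.summable
  refine measure_mono (fun ω hω => ?_)
  obtain ⟨n, hn1, ⟨hmem, hnot⟩, hSx, hSy⟩ := hω
  exact ⟨n, hn1, ⟨hSx ▸ Or.inl hx,
    fun m hm hmem' => hnot m hm (hmem'.imp (fun h => hBB h) id)⟩, hSx, hSy⟩

/-- For connected sets `V̄, Ṽ ⊆ H` containing `L₀` and a directed
boundary edge `e = x → y` with `x ∈ V̄ ∩ Ṽ` and `y ∉ V̄ ∪ Ṽ`, the stationary harmonic
measures (the limits `a, b, c, d` of the `N`-level measures for `V̄, Ṽ, V̄ ∩ Ṽ, V̄ ∪ Ṽ`)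
satisfy `|a − b| ≤ c − d`. -/
theorem stmt8 {Ω : Type*} [MeasurableSpace Ω] (P : Site → Measure Ω) (S : ℕ → Ω → Site)
    (hS : IsSRW P S) (Vb Vt : Set Site) (hVbU : Vb ⊆ UH) (hVtU : Vt ⊆ UH)
    (hcb : SetConnected Vb) (hct : SetConnected Vt)
    (hLb : Line 0 ⊆ Vb) (hLt : Line 0 ⊆ Vt)
    (e : Site × Site) (hx : e.1 ∈ Vb ∩ Vt) (hy : e.2 ∉ Vb ∪ Vt) (hyU : e.2 ∈ UH)
    (hadj : adjSite e.1 e.2)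
    (a b c d : ℝ≥0∞)
    (ha : Tendsto (fun N : ℕ => HedgeN P S Vb (N : ℤ) e) atTop (nhds a))
    (hb : Tendsto (fun N : ℕ => HedgeN P S Vt (N : ℤ) e) atTop (nhds b))
    (hc : Tendsto (fun N : ℕ => HedgeN P S (Vb ∩ Vt) (N : ℤ) e) atTop (nhds c))
    (hd : Tendsto (fun N : ℕ => HedgeN P S (Vb ∪ Vt) (N : ℤ) e) atTop (nhds d)) :
    (a - b) ⊔ (b - a) ≤ c - d := by
  have hac : a ≤ c := le_of_tendsto_of_tendsto' ha hc fun N =>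
    hedgeN_anti P S Set.inter_subset_left N e hx
  have hbc : b ≤ c := le_of_tendsto_of_tendsto' hb hc fun N =>
    hedgeN_anti P S Set.inter_subset_right N e hx
  have hda : d ≤ a := le_of_tendsto_of_tendsto' hd ha fun N =>
    hedgeN_anti P S Set.subset_union_left N e hx.1
  have hdb : d ≤ b := le_of_tendsto_of_tendsto' hd hb fun N =>
    hedgeN_anti P S Set.subset_union_right N e hx.2
  exact sup_le (tsub_le_tsub hac hdb) (tsub_le_tsub hbc hda)
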